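/- Let X ⊆ ℝⁿ be a nonempty compact convex set. Then the epigraph {(x, t) ∈ ℝⁿ × ℝ : x ∈ X, −‖x‖_∞ ≤ t} of the reverse ℓ_∞-norm function restricted to X is MICP-representable. -/
import Mathlib


/-- A set `S ⊆ E` (think `E = ℝⁿ`) is mixed-integer convex programming representable
(MICP-R) if there exist nonnegative integers `p`, `d` and a closed convex set
`M ⊆ E × ℝᵖ × ℝᵈ` such that `x ∈ S` iff there are `y ∈ ℝᵖ` and `z ∈ ℝᵈ` with all
coordinates of `z` integral and `(x, y, z) ∈ M`. -/
def IsMICPR {E : Type*} [AddCommGroup E] [Module ℝ E] [TopologicalSpace E]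
    (S : Set E) : Prop :=
  ∃ (p d : ℕ) (M : Set (E × (Fin p → ℝ) × (Fin d → ℝ))),
    IsClosed M ∧ Convex ℝ M ∧
      ∀ x : E, x ∈ S ↔ ∃ (y : Fin p → ℝ) (z : Fin d → ℝ),
        (∀ i, ∃ k : ℤ, z i = (k : ℝ)) ∧ (x, y, z) ∈ M

/-- For a nonempty compact convex `X ⊆ ℝⁿ`, the epigraph
`{(x, t) : x ∈ X, −‖x‖_∞ ≤ t}` of the reverse `ℓ_∞`-norm function restricted to `X`
is MICP-representable.  Here `‖x‖_∞ = ⨆ i, |x i|` is the maximum of the `|x i|`. -/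
theorem epigraph_neg_linf_micpr {n : ℕ} (X : Set (Fin n → ℝ)) (hne : X.Nonempty)
    (hcomp : IsCompact X) (hconv : Convex ℝ X) :
    IsMICPR {xt : (Fin n → ℝ) × ℝ | xt.1 ∈ X ∧ -(⨆ i, |xt.1 i|) ≤ xt.2} := by
  unfold IsMICPR
  -- bound
  obtain ⟨B, hB0, hxB⟩ : ∃ B : ℝ, 0 ≤ B ∧ ∀ x ∈ X, ∀ i, |x i| ≤ B := by
    obtain ⟨B, hB⟩ := hcomp.isBounded.subset_closedBall 0
    refine ⟨B, ?_, ?_⟩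
    · obtain ⟨x0, hx0⟩ := hne
      have := hB hx0
      simp [Metric.mem_closedBall] at this
      exact le_trans (norm_nonneg _) this
    · intro x hx i
      have h1 := hB hx
      rw [Metric.mem_closedBall, dist_zero_right] at h1
      calc |x i| = ‖x i‖ := rfl
        _ ≤ ‖x‖ := norm_le_pi_norm x i
        _ ≤ B := h1
  set m := 2 * n + 1 with hm
  set ℓ : Fin m → Fin n → ℝ :=
    fun j i => if (j : ℕ) = (i : ℕ) then 1 else if (j : ℕ) = n + (i : ℕ) then -1 else 0 with hℓ
  -- sup facts
  have hbdd : ∀ x : Fin n → ℝ, BddAbove (Set.range fun i => |x i|) :=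
    fun x => (Set.finite_range _).bddAbove
  have hsup0 : ∀ x : Fin n → ℝ, 0 ≤ ⨆ i, |x i| :=
    fun x => Real.iSup_nonneg fun i => abs_nonneg _
  have habs_le : ∀ (x : Fin n → ℝ) i, |x i| ≤ ⨆ i, |x i| := fun x i => le_ciSup (hbdd x) i
  -- dot product evaluation
  have hdot_lo : ∀ (x : Fin n → ℝ) (j : Fin m) (h : (j : ℕ) < n),
      ∑ i, ℓ j i * x i = x ⟨j, h⟩ := by
    intro x j h
    rw [Fintype.sum_eq_single (⟨(j : ℕ), h⟩ : Fin n)]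
    · simp [hℓ]
    · intro i hi
      have : (j : ℕ) ≠ (i : ℕ) := by
        intro he; apply hi; ext; simp [he]
      have h2 : (j : ℕ) ≠ n + (i : ℕ) := by omega
      simp [hℓ, this, h2]
  have hdot_mid : ∀ (x : Fin n → ℝ) (j : Fin m) (h1 : n ≤ (j : ℕ)) (h2 : (j : ℕ) < 2 * n),
      ∑ i, ℓ j i * x i = -x ⟨(j : ℕ) - n, by omega⟩ := by
    intro x j h1 h2
    rw [Fintype.sum_eq_single (⟨(j : ℕ) - n, by omega⟩ : Fin n)]
    · have hv : ((⟨(j : ℕ) - n, by omega⟩ : Fin n) : ℕ) = (j : ℕ) - n := rfl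
      simp only [hℓ, hv]
      rw [if_neg (by omega), if_pos (by omega)]
      ring
    · intro i hi
      have hne2 : (j : ℕ) ≠ n + (i : ℕ) := by
        intro he; apply hi; ext; simp; omega
      have : (j : ℕ) ≠ (i : ℕ) := by omega
      simp [hℓ, this, hne2]
  have hdot_top : ∀ (x : Fin n → ℝ) (j : Fin m) (h : (j : ℕ) = 2 * n),
      ∑ i, ℓ j i * x i = 0 := by
    intro x j h
    apply Finset.sum_eq_zero
    intro i _
    have h1 : (j : ℕ) ≠ (i : ℕ) := by omega
    have h2 : (j : ℕ) ≠ n + (i : ℕ) := by omega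
    simp [hℓ, h1, h2]
  -- dot bounded by sup
  have hdot_abs : ∀ (x : Fin n → ℝ) (j : Fin m), |∑ i, ℓ j i * x i| ≤ ⨆ i, |x i| := by
    intro x j
    rcases lt_or_ge (j : ℕ) n with h | h
    · rw [hdot_lo x j h]; exact habs_le x _
    rcases lt_or_ge (j : ℕ) (2 * n) with h2 | h2
    · rw [hdot_mid x j h h2, abs_neg]; exact habs_le x _
    · have : (j : ℕ) = 2 * n := by omega
      rw [hdot_top x j this]; simpa using hsup0 x
  -- some dot achieves the sup
  have hdot_ach : ∀ x : Fin n → ℝ, ∃ j : Fin m, ∑ i, ℓ j i * x i = ⨆ i, |x i| := by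
    intro x
    rcases Nat.eq_zero_or_pos n with hn | hn
    · refine ⟨⟨2 * n, by omega⟩, ?_⟩
      rw [hdot_top x _ rfl]
      subst hn
      simp [Real.iSup_of_isEmpty]
    · have : Nonempty (Fin n) := ⟨⟨0, hn⟩⟩
      obtain ⟨i0, hi0⟩ := Finite.exists_max fun i => |x i|
      have hs : (⨆ i, |x i|) = |x i0| := le_antisymm (ciSup_le hi0) (habs_le x i0)
      rcases le_or_gt 0 (x i0) with hx0 | hx0
      · refine ⟨⟨(i0 : ℕ), by omega⟩, ?_⟩
        rw [hdot_lo x _ (by simpa using i0.2)]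
        simp [hs, abs_of_nonneg hx0]
      · refine ⟨⟨n + (i0 : ℕ), by omega⟩, ?_⟩
        rw [hdot_mid x _ (by simp) (by simp; omega)]
        simp [hs, abs_of_neg hx0]
  have hsup_le : ∀ x ∈ X, (⨆ i, |x i|) ≤ B := by
    intro x hx
    rcases isEmpty_or_nonempty (Fin n) with h | h
    · rw [Real.iSup_of_isEmpty]; exact hB0
    · exact ciSup_le fun i => hxB x hx i
  refine ⟨0, m, {w : ((Fin n → ℝ) × ℝ) × (Fin 0 → ℝ) × (Fin m → ℝ) |
      w.1.1 ∈ X ∧ (∀ j, 0 ≤ w.2.2 j) ∧ (∑ j, w.2.2 j) = 1 ∧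
      ∀ j, 0 ≤ w.1.2 + (∑ i, ℓ j i * w.1.1 i) + 2 * B * (1 - w.2.2 j)}, ?_, ?_, ?_⟩
  · -- closedness
    simp only [Set.setOf_and, Set.setOf_forall]
    refine IsClosed.inter (hcomp.isClosed.preimage (by fun_prop)) ?_
    refine IsClosed.inter (isClosed_iInter fun j =>
      isClosed_le continuous_const (by fun_prop)) ?_
    refine IsClosed.inter (isClosed_eq (continuous_finset_sum _ fun j _ => by fun_prop)
      continuous_const) ?_
    refine isClosed_iInter fun j => isClosed_le continuous_const ?_
    have : Continuous fun w : ((Fin n → ℝ) × ℝ) × (Fin 0 → ℝ) × (Fin m → ℝ) =>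
        ∑ i, ℓ j i * w.1.1 i := continuous_finset_sum _ fun i _ => by fun_prop
    fun_prop
  · -- convexity
    rintro ⟨⟨x1, t1⟩, y1, z1⟩ ⟨hx1, hz1, hs1, hc1⟩ ⟨⟨x2, t2⟩, y2, z2⟩ ⟨hx2, hz2, hs2, hc2⟩
      a b ha hb hab
    have h2B : 2 * B * (a + b) = 2 * B := by rw [hab]; ring
    refine ⟨hconv hx1 hx2 ha hb hab, ?_, ?_, ?_⟩
    · intro j
      simpa using add_nonneg (mul_nonneg ha (hz1 j)) (mul_nonneg hb (hz2 j))
    · simp only [Prod.snd_add, Prod.smul_snd, Pi.add_apply, Pi.smul_apply, smul_eq_mul]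
      rw [Finset.sum_add_distrib, ← Finset.mul_sum, ← Finset.mul_sum, hs1, hs2]
      linarith
    · intro j
      have hsum : ∑ i, ℓ j i * (a * x1 i + b * x2 i) =
          a * (∑ i, ℓ j i * x1 i) + b * (∑ i, ℓ j i * x2 i) := by
        rw [Finset.mul_sum, Finset.mul_sum, ← Finset.sum_add_distrib]
        exact Finset.sum_congr rfl fun i _ => by ring
      simp only [Prod.fst_add, Prod.snd_add, Prod.smul_fst, Prod.smul_snd, Pi.add_apply,
        Pi.smul_apply, smul_eq_mul]
      rw [hsum]
      have e1 := mul_nonneg ha (hc1 j)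
      have e2 := mul_nonneg hb (hc2 j)
      nlinarith [e1, e2, h2B]
  · -- membership characterization
    rintro ⟨x, t⟩
    simp only [Set.mem_setOf_eq]
    constructor
    · rintro ⟨hx, ht⟩
      obtain ⟨j0, hj0⟩ := hdot_ach x
      refine ⟨0, fun j => if j = j0 then 1 else 0, ?_, hx, ?_, ?_, ?_⟩
      · intro i
        rcases eq_or_ne i j0 with h | h
        · exact ⟨1, by simp [h]⟩
        · exact ⟨0, by simp [h]⟩
      · intro j; dsimp only; split <;> norm_num
      · simp
      · intro j
        rcases eq_or_ne j j0 with h | h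
        · subst h
          dsimp only
          rw [if_pos rfl, hj0]
          linarith
        · dsimp only
          rw [if_neg h]
          have h1 := hdot_abs x j
          have h2 := hsup_le x hx
          have h3 := neg_abs_le (∑ i, ℓ j i * x i)
          linarith
    · rintro ⟨y, z, hzint, hx, hz0, hzs, hc⟩
      refine ⟨hx, ?_⟩
      have hex : ∃ j, 1 ≤ z j := by
        by_contra h
        push_neg at h
        have hz : ∀ j, z j = 0 := by
          intro j
          obtain ⟨k, hk⟩ := hzint j
          have h1 : (0 : ℝ) ≤ (k : ℝ) := hk ▸ hz0 j
          have h2 : (k : ℝ) < 1 := hk ▸ h j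
          have : k = 0 := by
            have h1' : (0 : ℤ) ≤ k := by exact_mod_cast h1
            have h2' : k < 1 := by exact_mod_cast h2
            omega
          rw [hk, this]; norm_num
        rw [Finset.sum_congr rfl fun j _ => hz j, Finset.sum_const_zero] at hzs
        exact one_ne_zero hzs.symm
      obtain ⟨j, hj⟩ := hex
      have hcj := hc j
      have h1 := mul_nonneg (by linarith : (0:ℝ) ≤ 2 * B) (by linarith : (0:ℝ) ≤ z j - 1)
      have h2 := le_abs_self (∑ i, ℓ j i * x i)
      have h3 := hdot_abs x j
      nlinarith
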